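/- Let G be the free abelian group on symbols K_{i,k} for i ∈ {1,2} and k ∈ ℤ. Define group endomorphisms T₁, T₂ of G by T_i(K_{i,k}) = −K_{i,k} and T_i(K_{j,k}) = K_{i,k+1} + K_{j,k+2} for j ≠ i. Then T₁T₂T₁ = T₂T₁T₂. -/
import Mathlib


/-- The free abelian group on symbols `K_{i,k}`, `i ∈ {1,2}` (encoded as `Fin 2`),
`k ∈ ℤ`. -/
abbrev FreeCartan : Type := (Fin 2 × ℤ) →₀ ℤ

/-- The endomorphism `T_i` of the free abelian group: `T_i(K_{i,k}) = −K_{i,k}` and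
`T_i(K_{j,k}) = K_{i,k+1} + K_{j,k+2}` for `j ≠ i`. -/
noncomputable def Tgen (i : Fin 2) : FreeCartan →ₗ[ℤ] FreeCartan :=
  Finsupp.lift FreeCartan ℤ (Fin 2 × ℤ) fun jk =>
    if jk.1 = i then -(Finsupp.single (i, jk.2) 1)
    else Finsupp.single (i, jk.2 + 1) 1 + Finsupp.single (jk.1, jk.2 + 2) 1

lemma Tgen_single (i j : Fin 2) (k : ℤ) :
    Tgen i (Finsupp.single (j, k) 1) =
      if j = i then -(Finsupp.single (i, k) 1)
      else Finsupp.single (i, k + 1) 1 + Finsupp.single (j, k + 2) 1 := by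
  simp [Tgen, Finsupp.lift_apply, Finsupp.sum_single_index]

/-- The braid relation `T₁T₂T₁ = T₂T₁T₂` for the action on Cartan currents. -/
theorem Tgen_braid_relation :
    Tgen 0 ∘ₗ Tgen 1 ∘ₗ Tgen 0 = Tgen 1 ∘ₗ Tgen 0 ∘ₗ Tgen 1 := by
  ext ⟨j, k⟩
  fin_cases j <;>
  · simp [Tgen_single, map_add, map_neg]
    ring_nf
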